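/- For all positive integers s, t with s ≠ t, the number s^8 + 68 s^6 t^2 - 122 s^4 t^4 + 68 s^2 t^6 + t^8 is not a perfect square. Consequently the two-parameter Saunderson family a = 6ts^5 - 20t^3s^3 + 6t^5s, b = -s^6 + 15t^2s^4 - 15t^4s^2 + t^6, c = 8s^5t - 8st^5 contains no perfect Euler brick. -/

import Mathlib

private lemma zmod8_kill : ∀ s t e : ZMod 8, (2*s+1)^2+(2*t+1)^2 ≠ 4*e^2 := by decide
private lemma zmod4_kill : ∀ s t a : ZMod 4, (2*s+1)^2+(2*t+1)^2 ≠ a^2 := by decide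
private lemma zmod16_kill : ∀ c k : ZMod 16,
    ¬ ((∃ a, (c+c)^2+(2*k+1)^2 = a^2) ∧ (∃ f, (c+c)^2+5*(2*k+1)^2 = f^2)) := by decide
private lemma zmod8_kill2 : ∀ w i j : ZMod 8,
    w^2 ≠ 16*i^2+16*j^2+288*(i*j)+40*i+40*j+5 := by decide

private lemma odd_sq8 (x : ℤ) (h : Odd x) : ∃ i, x^2 = 8*i+1 := by
  obtain ⟨k, rfl⟩ := h
  obtain ⟨j, hj⟩ := Int.even_mul_succ_self k
  exact ⟨j, by linear_combination 4*hj⟩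

private lemma pow4_natAbs (x : ℤ) : x^4 = ((x.natAbs : ℤ))^4 := by
  rw [show ((x.natAbs : ℤ))^4 = ((x.natAbs : ℤ)^2)^2 by ring, Int.natAbs_sq]; ring

private lemma sq_pos_of_ne (x : ℤ) (hx : x ≠ 0) : 0 < x^2 :=
  lt_of_le_of_ne (sq_nonneg x) (Ne.symm (pow_ne_zero 2 hx))
private lemma odd_of_sq (t : ℤ) (h : Odd (t^2)) : Odd t := by
  rcases Int.even_or_odd t with ⟨c, rfl⟩ | ho
  · exact absurd h (by simp [Int.not_odd_iff_even.mpr (⟨2*c^2, by ring⟩ : Even ((c+c)^2))])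
  · exact ho

private lemma lemE (m N x y : ℤ) (hco : IsCoprime m N) (hm : Odd m)
    (hx : x ≠ 0) (hy : y ≠ 0) (h1 : x^2 = m*(m+N)) (h2 : y^2 = N*(4*N-m)) :
    ∃ b e a f : ℤ, e ≠ 0 ∧ e^4 = N^2 ∧ b^2+e^2 = a^2 ∧ b^2+5*e^2 = f^2 := by
  have hN0 : N ≠ 0 := by
    rintro rfl
    rw [show (0:ℤ)*(4*0-m) = 0 by ring] at h2
    exact hy (pow_eq_zero_iff two_ne_zero |>.mp h2)
  have hco1 : IsCoprime m (m+N) := by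
    have h := hco.add_mul_left_right 1
    rwa [show N + m*1 = m + N by ring] at h
  have hco3 : IsCoprime N (4*N-m) := by
    have h := (hco.symm.add_mul_left_right (-4)).neg_right
    rwa [show -(m + N*(-4)) = 4*N - m by ring] at h
  obtain ⟨a0, ha0⟩ := Int.sq_of_isCoprime hco1 h1.symm
  obtain ⟨b0, hb0⟩ := Int.sq_of_isCoprime hco1.symm (show (m+N)*m = x^2 by linear_combination -h1)
  obtain ⟨e0, he0⟩ := Int.sq_of_isCoprime hco3 h2.symm
  obtain ⟨f0, hf0⟩ := Int.sq_of_isCoprime hco3.symm (show (4*N-m)*N = y^2 by linear_combination -h2)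
  have hx2 : 0 < x^2 := sq_pos_of_ne x hx
  have hy2 : 0 < y^2 := sq_pos_of_ne y hy
  have h4odd : Odd (4*N-m) := by
    obtain ⟨k, hk⟩ := hm; exact ⟨2*N-k-1, by omega⟩
  have hmm : (m = a0^2 ∧ m+N = b0^2) ∨ (m = -a0^2 ∧ m+N = -b0^2) := by
    rcases ha0 with ha | ha <;> rcases hb0 with hb | hb
    · exact Or.inl ⟨ha, hb⟩
    · exfalso; nlinarith [sq_nonneg (a0*b0)]
    · exfalso; nlinarith [sq_nonneg (a0*b0)]
    · exact Or.inr ⟨ha, hb⟩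
  have hNN : (N = e0^2 ∧ 4*N-m = f0^2) ∨ (N = -e0^2 ∧ 4*N-m = -f0^2) := by
    rcases he0 with hee | hee <;> rcases hf0 with hf | hf
    · exact Or.inl ⟨hee, hf⟩
    · exfalso; nlinarith [sq_nonneg (e0*f0)]
    · exfalso; nlinarith [sq_nonneg (e0*f0)]
    · exact Or.inr ⟨hee, hf⟩
  have he00 : e0 ≠ 0 := by
    rintro rfl; rcases hNN with ⟨hN, _⟩ | ⟨hN, _⟩ <;> simp at hN <;> exact hN0 hN
  have ha0odd : Odd a0 := by
    apply odd_of_sq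
    rcases hmm with ⟨hM, _⟩ | ⟨hM, _⟩
    · rwa [hM] at hm
    · rw [hM] at hm; rwa [odd_neg] at hm
  have hf0odd : Odd f0 := by
    apply odd_of_sq
    rcases hNN with ⟨_, hF⟩ | ⟨_, hF⟩
    · rwa [hF] at h4odd
    · rw [hF] at h4odd; rwa [odd_neg] at h4odd
  rcases hmm with ⟨hM1, hM2⟩ | ⟨hM1, hM2⟩ <;> rcases hNN with ⟨hN1, hN2⟩ | ⟨hN1, hN2⟩
  · exfalso
    have key : a0^2 + f0^2 = 4*e0^2 := by linarith
    obtain ⟨sa, hsa⟩ := ha0odd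
    obtain ⟨st, hst⟩ := hf0odd
    rw [hsa, hst] at key
    have hc := congrArg (fun t : ℤ => (t : ZMod 8)) key
    push_cast at hc
    exact zmod8_kill _ _ _ hc
  · exact ⟨b0, e0, a0, f0, he00, by rw [hN1]; ring, by linarith, by linarith⟩
  · exact ⟨b0, e0, a0, f0, he00, by rw [hN1]; ring, by linarith, by linarith⟩
  · exfalso
    have key : a0^2 + f0^2 = 4*e0^2 := by linarith
    obtain ⟨sa, hsa⟩ := ha0odd
    obtain ⟨st, hst⟩ := hf0odd
    rw [hsa, hst] at key
    have hc := congrArg (fun t : ℤ => (t : ZMod 8)) key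
    push_cast at hc
    exact zmod8_kill _ _ _ hc
private lemma lemR' (x y z : ℤ) (hco : Int.gcd x y = 1) (hx : x ≠ 0) (hy : y ≠ 0)
    (hxo : Odd x) (hye : Even y) (hz : z^2 = x^4+18*x^2*y^2+y^4) :
    ∃ b e a f : ℤ, e ≠ 0 ∧ 4*e^4 ≤ x^2+y^2 ∧ b^2+e^2 = a^2 ∧ b^2+5*e^2 = f^2 := by
  have hx2 : 0 < x^2 := sq_pos_of_ne x hx
  have hy2 : 0 < y^2 := sq_pos_of_ne y hy
  have hzodd : Odd z := by
    apply odd_of_sq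
    rw [hz]
    obtain ⟨c, rfl⟩ := hye
    obtain ⟨k, rfl⟩ := hxo
    exact ⟨8*k^4+16*k^3+12*k^2+4*k+144*k^2*c^2+144*k*c^2+36*c^2+8*c^4, by ring⟩
  -- 5 divides (z - v)(z + v) where v = x^2 - y^2
  have h5dvd : (5:ℤ) ∣ (z - (x^2-y^2)) * (z + (x^2-y^2)) :=
    ⟨4*x^2*y^2, by linear_combination hz⟩
  have hp5 : Prime (5:ℤ) := by norm_num
  have hz' : ∃ z', z'^2 = z^2 ∧ Odd z' ∧ ∃ c, z' - (x^2-y^2) = 5*c := by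
    rcases (hp5.dvd_mul.mp h5dvd) with ⟨c, hc⟩ | ⟨c, hc⟩
    · exact ⟨z, rfl, hzodd, c, hc⟩
    · exact ⟨-z, by ring, by rwa [odd_neg], -c, by linarith⟩
  obtain ⟨z', hz'2, hz'odd, c, hc⟩ := hz'
  obtain ⟨α, hα⟩ : ∃ α : ℤ, α = c + (x^2-y^2) := ⟨_, rfl⟩
  obtain ⟨β, hβ⟩ : ∃ β : ℤ, β = -(2*c) := ⟨_, rfl⟩
  have h5eq : 5*(α^2 + β^2) = 5*((x^2+y^2)^2) := by
    rw [hα, hβ]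
    linear_combination hz'2 + hz - (z' + 5*c + (x^2-y^2))*hc
  have hαβ : α^2 + β^2 = (x^2+y^2)^2 :=
    mul_left_cancel₀ (by norm_num : (5:ℤ) ≠ 0) h5eq
  have hαodd : Odd α := by
    have h1 : α = z' - 4*c := by rw [hα]; linarith [hc]
    rw [h1]
    obtain ⟨k, hk⟩ := hz'odd
    exact ⟨k - 2*c, by omega⟩
  -- gcd α β = 1
  have hgcd : Int.gcd α β = 1 := by
    by_contra hne
    obtain ⟨p, hp, hpdvd⟩ := Nat.exists_prime_and_dvd hne
    have hpz : Prime (p:ℤ) := Nat.prime_iff_prime_int.mp hp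
    have hpα : (p:ℤ) ∣ α := (Int.natCast_dvd_natCast.mpr hpdvd).trans (Int.gcd_dvd_left _ _)
    have hpβ : (p:ℤ) ∣ β := (Int.natCast_dvd_natCast.mpr hpdvd).trans (Int.gcd_dvd_right _ _)
    have hp2 : p ≠ 2 := by
      rintro rfl
      obtain ⟨t, ht⟩ := hpα
      obtain ⟨k', hk'⟩ := hαodd
      omega
    have hpv : (p:ℤ) ∣ (x^2-y^2) := by
      have h2v : 2*(x^2-y^2) = 2*α + β := by rw [hα, hβ]; ring
      have : (p:ℤ) ∣ 2*(x^2-y^2) := by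
        rw [h2v]; exact dvd_add (Dvd.dvd.mul_left hpα 2) hpβ
      rcases hpz.dvd_mul.mp this with h2 | hv
      · exfalso
        have hpd : p ∣ 2 := Int.natCast_dvd_natCast.mp (by exact_mod_cast h2)
        exact hp2 ((Nat.prime_dvd_prime_iff_eq hp Nat.prime_two).mp hpd)
      · exact hv
    have hpu : (p:ℤ) ∣ (x^2+y^2) := by
      apply hpz.dvd_of_dvd_pow (n := 2)
      rw [← hαβ]
      exact dvd_add (dvd_pow hpα two_ne_zero) (dvd_pow hpβ two_ne_zero)
    have hpx : (p:ℤ) ∣ x := by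
      apply hpz.dvd_of_dvd_pow (n := 2)
      have h2 : (p:ℤ) ∣ 2*x^2 := by
        have : 2*x^2 = (x^2+y^2) + (x^2-y^2) := by ring
        rw [this]; exact dvd_add hpu hpv
      rcases hpz.dvd_mul.mp h2 with h2' | hx'
      · exfalso
        have hpd : p ∣ 2 := Int.natCast_dvd_natCast.mp (by exact_mod_cast h2')
        exact hp2 ((Nat.prime_dvd_prime_iff_eq hp Nat.prime_two).mp hpd)
      · exact hx'
    have hpy : (p:ℤ) ∣ y := by
      apply hpz.dvd_of_dvd_pow (n := 2)
      have h2 : (p:ℤ) ∣ 2*y^2 := by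
        have : 2*y^2 = (x^2+y^2) - (x^2-y^2) := by ring
        rw [this]; exact dvd_sub hpu hpv
      rcases hpz.dvd_mul.mp h2 with h2' | hy'
      · exfalso
        have hpd : p ∣ 2 := Int.natCast_dvd_natCast.mp (by exact_mod_cast h2')
        exact hp2 ((Nat.prime_dvd_prime_iff_eq hp Nat.prime_two).mp hpd)
      · exact hy'
    have : (p:ℤ) ∣ ↑(Int.gcd x y) := Int.dvd_coe_gcd hpx hpy
    rw [hco] at this
    have : p ∣ 1 := Int.natCast_dvd_natCast.mp (by exact_mod_cast this)
    exact hp.one_lt.ne' (Nat.dvd_one.mp this)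
  -- Pythagorean classification
  have hPT : PythagoreanTriple α β (x^2+y^2) := by
    show α*α + β*β = (x^2+y^2)*(x^2+y^2)
    linear_combination hαβ
  obtain ⟨m, n, hmn1, hmn2, hmncop, hmnpar⟩ :=
    PythagoreanTriple.coprime_classification.mp ⟨hPT, hgcd⟩
  have hαm : α = m^2 - n^2 ∧ β = 2*m*n := by
    rcases hmn1 with h | ⟨h1, h2⟩
    · exact h
    · exfalso
      have hev : Even α := by rw [h1]; exact ⟨m*n, by ring⟩
      exact (Int.not_odd_iff_even.mpr hev) hαodd
  obtain ⟨hαm1, hαm2⟩ := hαm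
  have hu2 : x^2 + y^2 = m^2 + n^2 := by
    rcases hmn2 with h | h
    · exact h
    · exfalso; nlinarith [sq_nonneg m, sq_nonneg n]
  have hv2 : 2*(x^2-y^2) = 2*(m^2-n^2) + 2*m*n := by
    have : 2*(x^2-y^2) = 2*α + β := by rw [hα, hβ]; ring
    rw [this, hαm1, hαm2]
  have h2x : 2*x^2 = m*(2*m+n) := by linarith
  have h2y : 2*y^2 = n*(2*n-m) := by linarith
  have hm0 : m ≠ 0 := by
    rintro rfl; rw [show (0:ℤ)*(2*0+n) = 0 by ring] at h2x; nlinarith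
  have hn0 : n ≠ 0 := by
    rintro rfl; rw [show (0:ℤ)*(2*0-m) = 0 by ring] at h2y; nlinarith
  rcases hmnpar with ⟨hm2, hn2⟩ | ⟨hm2, hn2⟩
  · -- m even, n odd : use lemE with (n, -M, y, x)
    obtain ⟨M, hM⟩ : ∃ M, m = 2*M := ⟨m/2, by omega⟩
    have hy2' : y^2 = n*(n + -M) := by
      apply mul_left_cancel₀ (two_ne_zero (α := ℤ))
      linear_combination h2y - n*hM
    have hx2' : x^2 = (-M)*(4*(-M) - n) := by
      apply mul_left_cancel₀ (two_ne_zero (α := ℤ))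
      linear_combination h2x + (2*m + 4*M + n)*hM
    have hcoN : IsCoprime n (-M) := by
      have h := (Int.isCoprime_iff_gcd_eq_one.mpr hmncop).symm
      rw [hM] at h
      exact h.of_mul_right_right.neg_right
    have hnodd : Odd n := Int.odd_iff.mpr hn2
    obtain ⟨b, e, a, f, he, heN, heq1, heq2⟩ := lemE n (-M) y x hcoN hnodd hy hx hy2' hx2'
    refine ⟨b, e, a, f, he, ?_, heq1, heq2⟩
    have h1 : 4*e^4 = m^2 := by rw [heN, hM]; ring
    linarith [h1, hu2, sq_nonneg n]
  · -- m odd, n even : use lemE with (m, N, x, y)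
    obtain ⟨N, hN⟩ : ∃ N, n = 2*N := ⟨n/2, by omega⟩
    have hx2' : x^2 = m*(m + N) := by
      apply mul_left_cancel₀ (two_ne_zero (α := ℤ))
      linear_combination h2x + m*hN
    have hy2' : y^2 = N*(4*N - m) := by
      apply mul_left_cancel₀ (two_ne_zero (α := ℤ))
      linear_combination h2y + (2*n + 4*N - m)*hN
    have hcoN : IsCoprime m N := by
      have h := Int.isCoprime_iff_gcd_eq_one.mpr hmncop
      rw [hN] at h
      exact h.of_mul_right_right
    have hmodd : Odd m := Int.odd_iff.mpr hm2
    obtain ⟨b, e, a, f, he, heN, heq1, heq2⟩ := lemE m N x y hcoN hmodd hx hy hx2' hy2'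
    refine ⟨b, e, a, f, he, ?_, heq1, heq2⟩
    have h1 : 4*e^4 = n^2 := by rw [heN, hN]; ring
    linarith [h1, hu2, sq_nonneg m]
private lemma one_le_sq (m : ℤ) (h : m ≠ 0) : 1 ≤ m^2 := by
  rcases m.lt_or_lt_of_ne h with h' | h' <;> nlinarith

private lemma step1_helper (A B : ℤ) (hA : 1 ≤ A) (hB : 1 ≤ B) :
    A + B ≤ 2*(A*B) ∧ A*B ≤ (A*B)*(A*B) := by constructor <;> nlinarith

private lemma step5_helper (g e1 e : ℤ) (hg : 1 ≤ g) (hee : e = g*e1) : e1^4 ≤ e^4 := by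
  have hg4 : 1 ≤ g^4 := by
    calc (1:ℤ) = 1^4 := by ring
    _ ≤ g^4 := pow_le_pow_left₀ (by norm_num) hg 4
  have hee4 : e^4 = g^4*e1^4 := by rw [hee]; ring
  nlinarith [mul_nonneg (sub_nonneg.mpr hg4) (sq_nonneg (e1^2))]

private lemma lemR (x y z : ℤ) (hco : Int.gcd x y = 1) (hx : x ≠ 0) (hy : y ≠ 0)
    (hpar : Odd x ∧ Even y ∨ Even x ∧ Odd y) (hz : z^2 = x^4+18*x^2*y^2+y^4) :
    ∃ b e a f : ℤ, e ≠ 0 ∧ 4*e^4 ≤ x^2+y^2 ∧ b^2+e^2 = a^2 ∧ b^2+5*e^2 = f^2 := by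
  rcases hpar with ⟨h1, h2⟩ | ⟨h1, h2⟩
  · exact lemR' x y z hco hx hy h1 h2 hz
  · obtain ⟨b, e, a, f, he, hb, heq1, heq2⟩ :=
      lemR' y x z (by rwa [Int.gcd_comm]) hy hx h2 h1 (by linear_combination hz)
    exact ⟨b, e, a, f, he, by linarith, heq1, heq2⟩

set_option maxHeartbeats 1000000 in
private lemma lemC : ∀ (n : ℕ) (b e a f : ℤ), e.natAbs = n →
    b^2+e^2 = a^2 → b^2+5*e^2 = f^2 → e = 0 := by
  intro n
  induction n using Nat.strong_induction_on with
  | _ n ih =>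
  intro b e a f hn h1 h2
  by_contra he0
  have hgpos : 0 < Int.gcd b e := Int.gcd_pos_iff.mpr (Or.inr he0)
  obtain ⟨b1, hb1⟩ : ((Int.gcd b e : ℤ)) ∣ b := Int.gcd_dvd_left _ _
  obtain ⟨e1, he1⟩ : ((Int.gcd b e : ℤ)) ∣ e := Int.gcd_dvd_right _ _
  set g : ℤ := (Int.gcd b e : ℤ) with hg
  have hgne : g ≠ 0 := by
    simp only [hg]
    exact_mod_cast hgpos.ne'
  have hg1 : 1 ≤ g := by
    simp only [hg]
    exact_mod_cast hgpos
  have hco1 : Int.gcd b1 e1 = 1 := by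
    have hb' : b / g = b1 := by rw [hb1]; exact Int.mul_ediv_cancel_left b1 hgne
    have he' : e / g = e1 := by rw [he1]; exact Int.mul_ediv_cancel_left e1 hgne
    have := Int.gcd_div_gcd_div_gcd hgpos
    rwa [← hg, hb', he'] at this
  have hga : g ∣ a := by
    have h4 : g^2 ∣ a^2 := ⟨b1^2+e1^2, by rw [← h1, hb1, he1]; ring⟩
    exact (Int.pow_dvd_pow_iff two_ne_zero).mp h4
  have hgf : g ∣ f := by
    have h4 : g^2 ∣ f^2 := ⟨b1^2+5*e1^2, by rw [← h2, hb1, he1]; ring⟩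
    exact (Int.pow_dvd_pow_iff two_ne_zero).mp h4
  obtain ⟨a1, ha1⟩ := hga
  obtain ⟨f1, hf1⟩ := hgf
  have hg2 : g^2 ≠ 0 := pow_ne_zero _ hgne
  have h1' : b1^2+e1^2 = a1^2 := by
    apply mul_left_cancel₀ hg2
    rw [hb1, he1, ha1] at h1
    linear_combination h1
  have h2' : b1^2+5*e1^2 = f1^2 := by
    apply mul_left_cancel₀ hg2
    rw [hb1, he1, hf1] at h2
    linear_combination h2
  have he10 : e1 ≠ 0 := by rintro rfl; rw [mul_zero] at he1; exact he0 he1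
  rcases Int.even_or_odd b1 with hb1e | hb1o <;> rcases Int.even_or_odd e1 with he1e | he1o
  · -- both even: contradict coprimality
    obtain ⟨c, hc⟩ := hb1e
    obtain ⟨d, hd⟩ := he1e
    have : (2:ℤ) ∣ ↑(Int.gcd b1 e1) := Int.dvd_coe_gcd ⟨c, by omega⟩ ⟨d, by omega⟩
    rw [hco1] at this
    norm_num at this
  · -- b1 even, e1 odd: mod 16 kill
    obtain ⟨c, hc⟩ := hb1e
    obtain ⟨k, hk⟩ := he1o
    rw [hc, hk] at h1' h2'
    have hh1 := congrArg (fun t : ℤ => (t : ZMod 16)) h1'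
    have hh2 := congrArg (fun t : ℤ => (t : ZMod 16)) h2'
    push_cast at hh1 hh2
    exact zmod16_kill _ _ ⟨⟨_, hh1⟩, ⟨_, hh2⟩⟩
  · -- b1 odd, e1 even: the descent
    have hPT : PythagoreanTriple b1 e1 a1 := by
      show b1*b1 + e1*e1 = a1*a1
      linear_combination h1'
    obtain ⟨m, n, hmn1, hmn2, hmncop, hmnpar⟩ :=
      PythagoreanTriple.coprime_classification.mp ⟨hPT, hco1⟩
    have hbm : b1 = m^2 - n^2 ∧ e1 = 2*m*n := by
      rcases hmn1 with h | ⟨h1'', h2''⟩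
      · exact h
      · exfalso
        have hev : Even b1 := by rw [h1'']; exact ⟨m*n, by ring⟩
        exact (Int.not_odd_iff_even.mpr hev) hb1o
    obtain ⟨hbm1, hbm2⟩ := hbm
    have hm0 : m ≠ 0 := by rintro rfl; rw [show 2*0*n = 0 by ring] at hbm2; exact he10 hbm2
    have hn0 : n ≠ 0 := by rintro rfl; rw [mul_zero] at hbm2; exact he10 hbm2
    have hq : f1^2 = m^4+18*m^2*n^2+n^4 := by
      rw [hbm1, hbm2] at h2'
      linear_combination -h2'
    have hpar : Odd m ∧ Even n ∨ Even m ∧ Odd n := by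
      rcases hmnpar with ⟨ha', hb'⟩ | ⟨ha', hb'⟩
      · exact Or.inr ⟨Int.even_iff.mpr ha', Int.odd_iff.mpr hb'⟩
      · exact Or.inl ⟨Int.odd_iff.mpr ha', Int.even_iff.mpr hb'⟩
    obtain ⟨b2, e2, a2, f2, he2, hbound, heq1, heq2⟩ := lemR m n f1 hmncop hm0 hn0 hpar hq
    -- measure decreases
    have hm1 : 1 ≤ m^2 := one_le_sq m hm0
    have hn1 : 1 ≤ n^2 := one_le_sq n hn0
    obtain ⟨step1, step3⟩ := step1_helper (m^2) (n^2) hm1 hn1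
    have step4 : e1^4 = 16*((m^2*n^2)*(m^2*n^2)) := by rw [hbm2]; ring
    have step5 : e1^4 ≤ e^4 := step5_helper g e1 e hg1 he1
    have hP1 : (1:ℤ) ≤ m^2*n^2 := by
      calc (1:ℤ) = 1*1 := by ring
      _ ≤ m^2*n^2 := mul_le_mul hm1 hn1 zero_le_one (by linarith)
    have key : e2^4 < e^4 := by linarith [hbound, step1, step3, step4, step5, hP1]
    have hlt : e2.natAbs < e.natAbs := by
      by_contra hle
      push_neg at hle
      have h4 : (e.natAbs:ℤ)^4 ≤ (e2.natAbs:ℤ)^4 := by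
        have : (e.natAbs:ℤ) ≤ (e2.natAbs:ℤ) := by exact_mod_cast hle
        exact pow_le_pow_left₀ (by positivity) this 4
      rw [← pow4_natAbs, ← pow4_natAbs] at h4
      linarith
    exact he2 (ih e2.natAbs (hn ▸ hlt) b2 e2 a2 f2 rfl heq1 heq2)
  · -- both odd: mod 4 kill
    obtain ⟨s, hs⟩ := hb1o
    obtain ⟨t, ht⟩ := he1o
    rw [hs, ht] at h1'
    have hh1 := congrArg (fun u : ℤ => (u : ZMod 4)) h1'
    push_cast at hh1
    exact zmod4_kill _ _ _ hh1

private lemma lemQ (x y z : ℤ) (hx : x ≠ 0) (hy : y ≠ 0)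
    (hz : z^2 = x^4+18*x^2*y^2+y^4) : False := by
  have hgpos : 0 < Int.gcd x y := Int.gcd_pos_iff.mpr (Or.inl hx)
  obtain ⟨x1, hx1⟩ : ((Int.gcd x y : ℤ)) ∣ x := Int.gcd_dvd_left _ _
  obtain ⟨y1, hy1⟩ : ((Int.gcd x y : ℤ)) ∣ y := Int.gcd_dvd_right _ _
  set g : ℤ := (Int.gcd x y : ℤ) with hg
  have hgne : g ≠ 0 := by
    simp only [hg]; exact_mod_cast hgpos.ne'
  have hco1 : Int.gcd x1 y1 = 1 := by
    have hx' : x / g = x1 := by rw [hx1]; exact Int.mul_ediv_cancel_left x1 hgne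
    have hy' : y / g = y1 := by rw [hy1]; exact Int.mul_ediv_cancel_left y1 hgne
    have := Int.gcd_div_gcd_div_gcd hgpos
    rwa [← hg, hx', hy'] at this
  have hgz : g^2 ∣ z := by
    have h4 : (g^2)^2 ∣ z^2 := ⟨x1^4+18*x1^2*y1^2+y1^4, by rw [hz, hx1, hy1]; ring⟩
    exact (Int.pow_dvd_pow_iff two_ne_zero).mp h4
  obtain ⟨z1, hz1⟩ := hgz
  have hg4 : g^4 ≠ 0 := pow_ne_zero _ hgne
  have hz1' : z1^2 = x1^4+18*x1^2*y1^2+y1^4 := by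
    apply mul_left_cancel₀ hg4
    rw [hx1, hy1, hz1] at hz
    linear_combination hz
  have hx10 : x1 ≠ 0 := by rintro rfl; rw [mul_zero] at hx1; exact hx hx1
  have hy10 : y1 ≠ 0 := by rintro rfl; rw [mul_zero] at hy1; exact hy hy1
  rcases Int.even_or_odd x1 with hx1e | hx1o <;> rcases Int.even_or_odd y1 with hy1e | hy1o
  · -- both even
    obtain ⟨c, hc⟩ := hx1e
    obtain ⟨d, hd⟩ := hy1e
    have : (2:ℤ) ∣ ↑(Int.gcd x1 y1) := Int.dvd_coe_gcd ⟨c, by omega⟩ ⟨d, by omega⟩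
    rw [hco1] at this
    norm_num at this
  · -- x1 even, y1 odd
    obtain ⟨b, e, a, f, he, _, heq1, heq2⟩ :=
      lemR x1 y1 z1 hco1 hx10 hy10 (Or.inr ⟨hx1e, hy1o⟩) hz1'
    exact he (lemC e.natAbs b e a f rfl heq1 heq2)
  · -- x1 odd, y1 even
    obtain ⟨b, e, a, f, he, _, heq1, heq2⟩ :=
      lemR x1 y1 z1 hco1 hx10 hy10 (Or.inl ⟨hx1o, hy1e⟩) hz1'
    exact he (lemC e.natAbs b e a f rfl heq1 heq2)
  · -- both odd: mod 8 kill
    obtain ⟨i, hi⟩ := odd_sq8 x1 hx1o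
    obtain ⟨j, hj⟩ := odd_sq8 y1 hy1o
    have hz2 : z1^2 = 64*i^2+64*j^2+1152*(i*j)+160*i+160*j+20 := by
      linear_combination hz1' + (x1^2+8*i+1+18*y1^2)*hi + (y1^2+8*j+1+18*(8*i+1))*hj
    have hz1e : Even z1 := by
      have : Even (z1^2) := by
        rw [hz2]; exact ⟨32*i^2+32*j^2+576*(i*j)+80*i+80*j+10, by ring⟩
      rcases Int.even_or_odd z1 with h | h
      · exact h
      · exfalso
        obtain ⟨k, hk⟩ := h
        rw [hk] at this
        exact (Int.not_odd_iff_even.mpr this) ⟨2*k^2+2*k, by ring⟩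
    obtain ⟨w, hw⟩ := hz1e
    have hw2 : w^2 = 16*i^2+16*j^2+288*(i*j)+40*i+40*j+5 := by
      apply mul_left_cancel₀ (by norm_num : (4:ℤ) ≠ 0)
      linear_combination hz2 - (z1+w+w)*hw
    have hh := congrArg (fun t : ℤ => (t : ZMod 8)) hw2
    push_cast at hh
    exact zmod8_kill2 _ _ _ hh
/-- For all positive integers `s ≠ t`, the number
`s^8 + 68s^6t^2 - 122s^4t^4 + 68s^2t^6 + t^8` is not a perfect square.
Consequently the two-parameter Saunderson family
`a = 6ts^5 - 20t^3s^3 + 6t^5s`, `b = -s^6 + 15t^2s^4 - 15t^4s^2 + t^6`,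
`c = 8s^5t - 8st^5` contains no perfect Euler brick. -/
theorem saunderson_family_not_perfect (s t : ℤ) (hs : 0 < s) (ht : 0 < t)
    (hst : s ≠ t) :
    (¬ ∃ k : ℤ, s ^ 8 + 68 * s ^ 6 * t ^ 2 - 122 * s ^ 4 * t ^ 4 +
        68 * s ^ 2 * t ^ 6 + t ^ 8 = k ^ 2) ∧
    (¬ ∃ k : ℤ, (6 * t * s ^ 5 - 20 * t ^ 3 * s ^ 3 + 6 * t ^ 5 * s) ^ 2 +
        (-s ^ 6 + 15 * t ^ 2 * s ^ 4 - 15 * t ^ 4 * s ^ 2 + t ^ 6) ^ 2 +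
        (8 * s ^ 5 * t - 8 * s * t ^ 5) ^ 2 = k ^ 2) := by
  have hx : 2*s*t ≠ 0 := by positivity
  have hy : s^2 - t^2 ≠ 0 := by
    intro h
    have h2 : (s-t)*(s+t) = 0 := by linear_combination h
    rcases mul_eq_zero.mp h2 with h' | h'
    · exact hst (by linarith)
    · linarith
  constructor
  · rintro ⟨k, hk⟩
    exact lemQ (2*s*t) (s^2-t^2) k hx hy (by linear_combination -hk)
  · rintro ⟨k, hk⟩
    have h2 : (s^2+t^2) ∣ k := by
      apply (Int.pow_dvd_pow_iff two_ne_zero).mp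
      exact ⟨s^8+68*s^6*t^2-122*s^4*t^4+68*s^2*t^6+t^8, by linear_combination -hk⟩
    obtain ⟨k1, hk1⟩ := h2
    have hne : (s^2+t^2)^2 ≠ 0 := by positivity
    have hQ : s^8+68*s^6*t^2-122*s^4*t^4+68*s^2*t^6+t^8 = k1^2 := by
      apply mul_left_cancel₀ hne
      linear_combination hk + (k + (s^2+t^2)*k1)*hk1
    exact lemQ (2*s*t) (s^2-t^2) k1 hx hy (by linear_combination -hQ)
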